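/- Let κ > 0 and ε ∈ (0, √(2/(eπ))], and set k = (√2/κ) · √(log(2/(π ε²))). Then the function f(x) = erf(kx) satisfies |f(x)| ≤ 1 for all real x, and |f(x) − sgn(x)| ≤ ε for all x with |x| ≥ κ/2. -/

import Mathlib

open MeasureTheory Set Filter

/-- The error function `erf x = (2/√π) ∫_0^x e^{-y²} dy`. -/
noncomputable def erf (x : ℝ) : ℝ :=
  2 / Real.sqrt Real.pi * ∫ y in (0:ℝ)..x, Real.exp (-(y ^ 2))

/-- The sign function, with `sgn 0 = 1/2`. -/
noncomputable def sgn (x : ℝ) : ℝ :=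
  if 0 < x then 1 else if x < 0 then -1 else 1/2

lemma gauss_integrable : MeasureTheory.Integrable (fun y : ℝ => Real.exp (-(y ^ 2))) := by
  have := integrable_exp_neg_mul_sq (b := 1) one_pos
  simpa using this

lemma gauss_Ioi0 : ∫ y in Ioi (0:ℝ), Real.exp (-(y ^ 2)) = Real.sqrt Real.pi / 2 := by
  have := integral_gaussian_Ioi 1
  simpa using this

lemma interval_le (x : ℝ) (hx : 0 ≤ x) :
    0 ≤ (∫ y in (0:ℝ)..x, Real.exp (-(y ^ 2))) ∧
      (∫ y in (0:ℝ)..x, Real.exp (-(y ^ 2))) ≤ Real.sqrt Real.pi / 2 := by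
  rw [intervalIntegral.integral_of_le hx]
  constructor
  · positivity
  · rw [← gauss_Ioi0]
    apply setIntegral_mono_set gauss_integrable.integrableOn
    · filter_upwards with y using (Real.exp_pos _).le
    · filter_upwards with y using fun hy => hy.1

lemma erf_neg (x : ℝ) : erf (-x) = - erf x := by
  unfold erf
  have h := intervalIntegral.integral_comp_neg (a := (0:ℝ)) (b := x)
    (fun y => Real.exp (-(y ^ 2)))
  simp only [neg_sq, neg_zero] at h
  rw [show (∫ y in (0:ℝ)..(-x), Real.exp (-(y ^ 2)))
      = - ∫ y in (-x)..(0:ℝ), Real.exp (-(y ^ 2)) from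
    (intervalIntegral.integral_symm _ _), ← h]
  ring

lemma erf_bounds (x : ℝ) (hx : 0 ≤ x) : 0 ≤ erf x ∧ erf x ≤ 1 := by
  obtain ⟨h1, h2⟩ := interval_le x hx
  have hπ : 0 < Real.sqrt Real.pi := Real.sqrt_pos.mpr Real.pi_pos
  unfold erf
  constructor
  · positivity
  · have := mul_le_mul_of_nonneg_left h2 (by positivity : (0:ℝ) ≤ 2 / Real.sqrt Real.pi)
    calc 2 / Real.sqrt Real.pi * ∫ y in (0:ℝ)..x, Real.exp (-(y ^ 2))
        ≤ 2 / Real.sqrt Real.pi * (Real.sqrt Real.pi / 2) := this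
      _ = 1 := by field_simp

lemma abs_erf_le_one (x : ℝ) : |erf x| ≤ 1 := by
  rcases le_total 0 x with hx | hx
  · obtain ⟨h1, h2⟩ := erf_bounds x hx
    rw [abs_of_nonneg h1]; exact h2
  · obtain ⟨h1, h2⟩ := erf_bounds (-x) (by linarith)
    rw [erf_neg] at h1 h2
    rw [abs_of_nonpos (by linarith)]; linarith

lemma moment (t : ℝ) (ht : 0 < t) :
    (∫ y in Ioi t, y * Real.exp (-(y ^ 2))) = Real.exp (-(t ^ 2)) / 2 ∧
      IntegrableOn (fun y => y * Real.exp (-(y ^ 2))) (Ioi t) := by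
  have hderiv : ∀ y ∈ Ici t, HasDerivAt (fun y : ℝ => -Real.exp (-(y ^ 2)) / 2)
      (y * Real.exp (-(y ^ 2))) y := by
    intro y _
    have h1 : HasDerivAt (fun y : ℝ => -(y ^ 2)) (-(2 * y)) y := by
      simpa using ((hasDerivAt_pow 2 y).fun_neg)
    have h2 := (h1.exp).fun_neg.div_const 2
    exact h2.congr_deriv (by ring)
  have hpos : ∀ y ∈ Ioi t, 0 ≤ y * Real.exp (-(y ^ 2)) := by
    intro y hy
    have : 0 < y := ht.trans hy
    positivity
  have htend : Tendsto (fun y : ℝ => -Real.exp (-(y ^ 2)) / 2) atTop (nhds 0) := by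
    have h1 : Tendsto (fun y : ℝ => -(y ^ 2)) atTop atBot := by
      apply Filter.tendsto_neg_atBot_iff.mpr
      exact tendsto_pow_atTop two_ne_zero
    have h2 : Tendsto (fun y : ℝ => Real.exp (-(y ^ 2))) atTop (nhds 0) :=
      Real.tendsto_exp_atBot.comp h1
    have := (h2.neg).div_const 2
    simpa using this
  constructor
  · have := integral_Ioi_of_hasDerivAt_of_nonneg' hderiv hpos htend
    rw [this]; ring
  · exact integrableOn_Ioi_deriv_of_nonneg' hderiv hpos htend

lemma tail (t : ℝ) (ht : 0 < t) :
    (∫ y in Ioi t, Real.exp (-(y ^ 2))) ≤ Real.exp (-(t ^ 2)) / (2 * t) := by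
  obtain ⟨hval, hint⟩ := moment t ht
  have step : (∫ y in Ioi t, Real.exp (-(y ^ 2)))
      ≤ ∫ y in Ioi t, (1 / t) * (y * Real.exp (-(y ^ 2))) := by
    apply setIntegral_mono_on gauss_integrable.integrableOn (hint.const_mul _)
      measurableSet_Ioi
    intro y hy
    have hyt : t < y := hy
    have h1 : 1 ≤ y / t := (one_le_div ht).mpr hyt.le
    have : Real.exp (-(y ^ 2)) * 1 ≤ Real.exp (-(y ^ 2)) * (y / t) :=
      mul_le_mul_of_nonneg_left h1 (Real.exp_pos _).le
    calc Real.exp (-(y ^ 2)) = Real.exp (-(y ^ 2)) * 1 := by ring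
      _ ≤ Real.exp (-(y ^ 2)) * (y / t) := this
      _ = 1 / t * (y * Real.exp (-(y ^ 2))) := by ring
  calc (∫ y in Ioi t, Real.exp (-(y ^ 2)))
      ≤ ∫ y in Ioi t, (1 / t) * (y * Real.exp (-(y ^ 2))) := step
    _ = (1 / t) * ∫ y in Ioi t, y * Real.exp (-(y ^ 2)) := MeasureTheory.integral_const_mul _ _
    _ = Real.exp (-(t ^ 2)) / (2 * t) := by rw [hval]; field_simp

lemma erf_split (t : ℝ) (ht : 0 < t) :
    erf t = 1 - 2 / Real.sqrt Real.pi * ∫ y in Ioi t, Real.exp (-(y ^ 2)) := by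
  have hsplit : (∫ y in Ioi (0:ℝ), Real.exp (-(y ^ 2)))
      = (∫ y in Ioc (0:ℝ) t, Real.exp (-(y ^ 2))) + ∫ y in Ioi t, Real.exp (-(y ^ 2)) := by
    rw [← setIntegral_union (Set.Ioc_disjoint_Ioi le_rfl) measurableSet_Ioi
      gauss_integrable.integrableOn gauss_integrable.integrableOn,
      Set.Ioc_union_Ioi_eq_Ioi ht.le]
  have hπ : 0 < Real.sqrt Real.pi := Real.sqrt_pos.mpr Real.pi_pos
  unfold erf
  rw [intervalIntegral.integral_of_le ht.le]
  have : (∫ y in Ioc (0:ℝ) t, Real.exp (-(y ^ 2)))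
      = Real.sqrt Real.pi / 2 - ∫ y in Ioi t, Real.exp (-(y ^ 2)) := by
    rw [← gauss_Ioi0, hsplit]; ring
  rw [this]
  field_simp

lemma erf_close (t t₀ : ℝ) (ht₀ : 0 < t₀) (ht : t₀ ≤ t) :
    |erf t - 1| ≤ 2 / Real.sqrt Real.pi * (Real.exp (-(t₀ ^ 2)) / (2 * t₀)) := by
  have ht' : 0 < t := ht₀.trans_le ht
  have hπ : 0 < Real.sqrt Real.pi := Real.sqrt_pos.mpr Real.pi_pos
  have htail := tail t ht'
  have hnn : 0 ≤ ∫ y in Ioi t, Real.exp (-(y ^ 2)) := by positivity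
  rw [erf_split t ht']
  rw [abs_of_nonpos (by nlinarith [mul_nonneg (by positivity : (0:ℝ) ≤ 2 / Real.sqrt Real.pi) hnn])]
  have hmono : Real.exp (-(t ^ 2)) / (2 * t) ≤ Real.exp (-(t₀ ^ 2)) / (2 * t₀) := by
    apply div_le_div₀ (Real.exp_pos _).le (Real.exp_le_exp.mpr (by nlinarith)) (by linarith)
    linarith
  have : (∫ y in Ioi t, Real.exp (-(y ^ 2))) ≤ Real.exp (-(t₀ ^ 2)) / (2 * t₀) :=
    htail.trans hmono
  nlinarith [mul_le_mul_of_nonneg_left this (by positivity : (0:ℝ) ≤ 2 / Real.sqrt Real.pi)]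


/-- Entire approximation to the sign function: for `κ > 0`, `ε ∈ (0, √(2/(eπ))]` and
`k = (√2/κ)·√(log(2/(π ε²)))`, the function `f x = erf (k x)` is bounded by `1` in absolute
value and satisfies `|f x − sgn x| ≤ ε` whenever `|x| ≥ κ/2`. -/
theorem erf_approx_sgn (κ ε k : ℝ) (hκ : 0 < κ) (hε0 : 0 < ε)
    (hε : ε ≤ Real.sqrt (2 / (Real.exp 1 * Real.pi)))
    (hk : k = Real.sqrt 2 / κ * Real.sqrt (Real.log (2 / (Real.pi * ε ^ 2)))) :
    (∀ x : ℝ, |erf (k * x)| ≤ 1) ∧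
      ∀ x : ℝ, κ / 2 ≤ |x| → |erf (k * x) - sgn x| ≤ ε := by
  have hπ := Real.pi_pos
  have he := Real.exp_pos 1
  set L := Real.log (2 / (Real.pi * ε ^ 2)) with hL
  have hε2 : ε ^ 2 ≤ 2 / (Real.exp 1 * Real.pi) := by
    have h := pow_le_pow_left₀ hε0.le hε 2
    rwa [Real.sq_sqrt (by positivity)] at h
  have harg : (0:ℝ) < 2 / (Real.pi * ε ^ 2) := by positivity
  have hL1 : 1 ≤ L := by
    rw [hL, Real.le_log_iff_exp_le harg, le_div_iff₀ (by positivity)]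
    have h2 : ε ^ 2 * (Real.exp 1 * Real.pi) ≤ 2 := (le_div_iff₀ (by positivity)).mp hε2
    nlinarith [h2]
  have hL0 : (0:ℝ) < L := by linarith
  have hexpL : Real.exp (-L) = Real.pi * ε ^ 2 / 2 := by
    rw [Real.exp_neg, hL, Real.exp_log harg, inv_div]
  set t₀ : ℝ := Real.sqrt 2 * Real.sqrt L / 2 with ht₀
  have hsL : 0 < Real.sqrt L := Real.sqrt_pos.mpr hL0
  have hs2 : 0 < Real.sqrt 2 := Real.sqrt_pos.mpr two_pos
  have ht₀pos : 0 < t₀ := by positivity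
  have ht₀sq : t₀ ^ 2 = L / 2 := by
    rw [ht₀, div_pow, mul_pow, Real.sq_sqrt two_pos.le, Real.sq_sqrt hL0.le]
    ring
  have hexpt₀ : Real.exp (-(t₀ ^ 2)) = ε * Real.sqrt Real.pi / Real.sqrt 2 := by
    rw [ht₀sq, show -(L/2) = (-L)/2 by ring, Real.exp_half, hexpL,
      Real.sqrt_div (by positivity) 2, Real.sqrt_mul hπ.le, Real.sqrt_sq hε0.le]
    ring
  have hBε : 2 / Real.sqrt Real.pi * (Real.exp (-(t₀ ^ 2)) / (2 * t₀)) ≤ ε := by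
    have hsπ : 0 < Real.sqrt Real.pi := Real.sqrt_pos.mpr hπ
    have hs2sq : Real.sqrt 2 ^ 2 = 2 := Real.sq_sqrt two_pos.le
    have hsL1 : 1 ≤ Real.sqrt L := by
      rw [show (1:ℝ) = Real.sqrt 1 by simp]
      exact Real.sqrt_le_sqrt hL1
    have heq : 2 / Real.sqrt Real.pi * (Real.exp (-(t₀ ^ 2)) / (2 * t₀)) = ε / Real.sqrt L := by
      rw [hexpt₀, ht₀]
      field_simp
      linear_combination (-1) * hs2sq
    rw [heq]
    exact div_le_self hε0.le hsL1
  have hk0 : 0 < k := by rw [hk]; positivity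
  have hkey : ∀ y : ℝ, κ / 2 ≤ y → |erf (k * y) - 1| ≤ ε := by
    intro y hy
    have ht : t₀ ≤ k * y := by
      have h1 : k * (κ / 2) = t₀ := by
        rw [hk, ht₀]; field_simp
      calc t₀ = k * (κ / 2) := h1.symm
        _ ≤ k * y := by apply mul_le_mul_of_nonneg_left hy hk0.le
    calc |erf (k * y) - 1| ≤ 2 / Real.sqrt Real.pi * (Real.exp (-(t₀ ^ 2)) / (2 * t₀)) :=
          erf_close (k * y) t₀ ht₀pos ht
      _ ≤ ε := hBε
  refine ⟨fun x => abs_erf_le_one _, fun x hx => ?_⟩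
  rcases le_abs.mp hx with h | h
  · have hx0 : 0 < x := lt_of_lt_of_le (by positivity) h
    rw [show sgn x = 1 from if_pos hx0]
    exact hkey x h
  · have hx0 : x < 0 := by nlinarith
    rw [show sgn x = -1 by rw [sgn, if_neg (by linarith), if_pos hx0]]
    have : erf (k * x) = - erf (k * (-x)) := by
      rw [← erf_neg]; ring_nf
    rw [this]
    rw [show -erf (k * (-x)) - (-1) = -(erf (k * (-x)) - 1) by ring, abs_neg]
    exact hkey (-x) h
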